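/- Let a₁, a₂, b₁, b₂ be real numbers and define h(x) = e^{2x} + (b₁a₂ − a₁b₂)·e^{−2x} + (a₁ − b₂)·(eˣ + e^{−x})·sin x + (a₂ + b₁ − 2)·eˣ·cos x + (2a₁b₂ − 2a₂b₁ + b₁ + a₂)·e^{−x}·cos x + 1 + (2b₂ − 2a₁)·sin x·cos x − (2b₁ + 2a₂)·(cos x)² + (b₁a₂ − b₂a₁). If either 1 + b₁ + a₂ + a₂b₁ − a₁b₂ < 0, or both 1 + b₁ + a₂ + a₂b₁ − a₁b₂ > 0 and b₁a₂ − a₁b₂ < 0, then there exists a real number p ≠ 0 with h(p) = 0. -/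

import Mathlib

theorem stmt_17 (a₁ a₂ b₁ b₂ : ℝ)
    (h : ℝ → ℝ)
    (hh : ∀ x, h x = Real.exp (2 * x) + (b₁ * a₂ - a₁ * b₂) * Real.exp (-2 * x) +
      (a₁ - b₂) * (Real.exp x + Real.exp (-x)) * Real.sin x +
      (a₂ + b₁ - 2) * Real.exp x * Real.cos x +
      (2 * a₁ * b₂ - 2 * a₂ * b₁ + b₁ + a₂) * Real.exp (-x) * Real.cos x +
      1 + (2 * b₂ - 2 * a₁) * Real.sin x * Real.cos x -
      (2 * b₁ + 2 * a₂) * (Real.cos x) ^ 2 + (b₁ * a₂ - b₂ * a₁))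
    (hc : 1 + b₁ + a₂ + a₂ * b₁ - a₁ * b₂ < 0 ∨
      (1 + b₁ + a₂ + a₂ * b₁ - a₁ * b₂ > 0 ∧ b₁ * a₂ - a₁ * b₂ < 0)) :
    ∃ p : ℝ, p ≠ 0 ∧ h p = 0 := by
  set D : ℝ := b₁ * a₂ - a₁ * b₂ with hD
  set G : ℝ → ℝ := fun x => Real.exp x + D * Real.exp (-x) +
    (a₁ - b₂) * Real.sin x + (a₂ + b₁) * Real.cos x with hG
  -- factorization: h x = (exp x + exp(-x) - 2 cos x) * G x
  have hfac : ∀ x, h x = (Real.exp x + Real.exp (-x) - 2 * Real.cos x) * G x := by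
    intro x
    have h1 : Real.exp (2 * x) = Real.exp x * Real.exp x := by
      rw [← Real.exp_add]; ring_nf
    have h2 : Real.exp (-2 * x) = Real.exp (-x) * Real.exp (-x) := by
      rw [← Real.exp_add]; ring_nf
    have h3 : Real.exp x * Real.exp (-x) = 1 := by
      rw [← Real.exp_add]; simp
    rw [hh x, h1, h2, hG]
    simp only []
    linear_combination (-(b₁ * a₂ - a₁ * b₂) - 1) * h3
  have hGcont : Continuous G := by
    rw [hG]; fun_prop
  have hG0 : G 0 = 1 + b₁ + a₂ + a₂ * b₁ - a₁ * b₂ := by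
    simp [hG, hD]; ring
  -- from a root of G get the result
  have key : ∀ p : ℝ, p ≠ 0 → G p = 0 → ∃ p : ℝ, p ≠ 0 ∧ h p = 0 := by
    intro p hp hGp
    exact ⟨p, hp, by rw [hfac p, hGp, mul_zero]⟩
  rcases hc with hneg | ⟨hpos, hDneg⟩
  · -- G 0 < 0; find x₀ > 0 with G x₀ > 0
    have hG0' : G 0 < 0 := by rw [hG0]; exact hneg
    set M : ℝ := |D| + |a₁ - b₂| + |a₂ + b₁| with hM
    have hMnn : 0 ≤ M := by positivity
    set x₀ : ℝ := M + 1 with hx₀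
    have hx₀pos : 0 < x₀ := by positivity
    have hGx₀ : 0 < G x₀ := by
      have he : M + 2 ≤ Real.exp x₀ := by
        have := Real.add_one_le_exp x₀
        linarith
      have hb1 : -|D| ≤ D * Real.exp (-x₀) := by
        have h1 : |D * Real.exp (-x₀)| ≤ |D| := by
          rw [abs_mul, abs_of_pos (Real.exp_pos _)]
          nlinarith [Real.exp_le_one_iff.mpr (by linarith : -x₀ ≤ 0), abs_nonneg D,
            Real.exp_pos (-x₀)]
        linarith [neg_abs_le (D * Real.exp (-x₀)), abs_le.mp h1]
      have hb2 : -|a₁ - b₂| ≤ (a₁ - b₂) * Real.sin x₀ := by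
        have h1 : |(a₁ - b₂) * Real.sin x₀| ≤ |a₁ - b₂| := by
          rw [abs_mul]
          nlinarith [Real.abs_sin_le_one x₀, abs_nonneg (a₁ - b₂)]
        linarith [abs_le.mp h1]
      have hb3 : -|a₂ + b₁| ≤ (a₂ + b₁) * Real.cos x₀ := by
        have h1 : |(a₂ + b₁) * Real.cos x₀| ≤ |a₂ + b₁| := by
          rw [abs_mul]
          nlinarith [Real.abs_cos_le_one x₀, abs_nonneg (a₂ + b₁)]
        linarith [abs_le.mp h1]
      have : G x₀ = Real.exp x₀ + D * Real.exp (-x₀) +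
          (a₁ - b₂) * Real.sin x₀ + (a₂ + b₁) * Real.cos x₀ := rfl
      rw [this]; rw [hM] at he; linarith
    -- IVT on [0, x₀]
    have hsub := intermediate_value_Icc (le_of_lt hx₀pos) hGcont.continuousOn
    have h0mem : (0:ℝ) ∈ Set.Icc (G 0) (G x₀) := ⟨le_of_lt hG0', le_of_lt hGx₀⟩
    obtain ⟨p, hpmem, hGp⟩ := hsub h0mem
    refine key p ?_ hGp
    intro hp0
    rw [hp0] at hGp
    rw [hGp] at hG0'
    exact lt_irrefl 0 hG0'
  · -- G 0 > 0, D < 0; find x₀ < 0 with G x₀ < 0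
    have hG0' : 0 < G 0 := by rw [hG0]; exact hpos
    have hDpos : 0 < -D := by linarith
    set N : ℝ := 1 + |a₁ - b₂| + |a₂ + b₁| with hN
    have hNpos : 0 < N := by positivity
    set x₀ : ℝ := -((N + 1) / (-D)) with hx₀
    have hx₀neg : x₀ < 0 := by
      rw [hx₀]
      have : 0 < (N + 1) / (-D) := by positivity
      linarith
    have hGx₀ : G x₀ < 0 := by
      have he1 : Real.exp x₀ ≤ 1 := Real.exp_le_one_iff.mpr (le_of_lt hx₀neg)
      have he2 : -x₀ + 1 ≤ Real.exp (-x₀) := by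
        have := Real.add_one_le_exp (-x₀)
        linarith
      have hx₀val : (-D) * (-x₀) = N + 1 := by
        rw [hx₀]
        field_simp
        exact div_self (ne_of_lt hDneg)
      have hDe : D * Real.exp (-x₀) ≤ -(N + 1) := by
        have h1 : (-D) * (-x₀ + 1) ≤ (-D) * Real.exp (-x₀) :=
          mul_le_mul_of_nonneg_left he2 (le_of_lt hDpos)
        nlinarith
      have hb2 : (a₁ - b₂) * Real.sin x₀ ≤ |a₁ - b₂| := by
        have h1 : |(a₁ - b₂) * Real.sin x₀| ≤ |a₁ - b₂| := by
          rw [abs_mul]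
          nlinarith [Real.abs_sin_le_one x₀, abs_nonneg (a₁ - b₂)]
        linarith [abs_le.mp h1]
      have hb3 : (a₂ + b₁) * Real.cos x₀ ≤ |a₂ + b₁| := by
        have h1 : |(a₂ + b₁) * Real.cos x₀| ≤ |a₂ + b₁| := by
          rw [abs_mul]
          nlinarith [Real.abs_cos_le_one x₀, abs_nonneg (a₂ + b₁)]
        linarith [abs_le.mp h1]
      have : G x₀ = Real.exp x₀ + D * Real.exp (-x₀) +
          (a₁ - b₂) * Real.sin x₀ + (a₂ + b₁) * Real.cos x₀ := rfl
      rw [this]; rw [hN] at hDe; linarith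
    have hsub := intermediate_value_Icc (le_of_lt hx₀neg) hGcont.continuousOn
    have h0mem : (0:ℝ) ∈ Set.Icc (G x₀) (G 0) := ⟨le_of_lt hGx₀, le_of_lt hG0'⟩
    obtain ⟨p, hpmem, hGp⟩ := hsub h0mem
    refine key p ?_ hGp
    intro hp0
    rw [hp0] at hGp
    rw [hGp] at hG0'
    exact lt_irrefl 0 hG0'
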